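/- Let 1 ≤ α < ω₁. If ω^α →_cl (ω^α, 3)², then α → (α, 3)², i.e., α is a partition ordinal. -/

import Mathlib

open Ordinal Set

/-- Cantor–Bendixson rank of an ordinal: the exponent of the last term of its
Cantor normal form, with `CB 0 = 0`. -/
noncomputable def CB (o : Ordinal) : Ordinal :=
  ((Ordinal.CNF Ordinal.omega0 o).getLast?.map Prod.fst).getD 0

/-- `X` is a closed copy of the ordinal `β`: there is an order isomorphism onto
`Iio β` (with the topology induced from the order topology on `Ordinal`) which
is a homeomorphism. -/
def IsClosedCopy (X : Set Ordinal) (β : Ordinal) : Prop :=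
  ∃ f : X ≃o (Set.Iio β), Continuous f ∧ Continuous f.symm

/-- `X` is homogeneous of color `i` for the pair coloring `c`. -/
def Homog (c : Ordinal → Ordinal → Fin 2) (X : Set Ordinal) (i : Fin 2) : Prop :=
  ∀ x ∈ X, ∀ y ∈ X, x < y → c x y = i

/-- The closed partition relation `γ →_cl (α,β)²`. -/
def ClPartition (γ α β : Ordinal) : Prop :=
  ∀ c : Ordinal → Ordinal → Fin 2,
    (∃ X ⊆ Set.Iio γ, IsClosedCopy X α ∧ Homog c X 0) ∨
    (∃ X ⊆ Set.Iio γ, IsClosedCopy X β ∧ Homog c X 1)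

/-- `X` is an order-isomorphic copy of the ordinal `β`. -/
def IsOrderCopy (X : Set Ordinal) (β : Ordinal) : Prop :=
  Nonempty (X ≃o Set.Iio β)

/-- The classical partition relation `γ → (α,β)²`. -/
def ClassPartition (γ α β : Ordinal) : Prop :=
  ∀ c : Ordinal → Ordinal → Fin 2,
    (∃ X ⊆ Set.Iio γ, IsOrderCopy X α ∧ Homog c X 0) ∨
    (∃ X ⊆ Set.Iio γ, IsOrderCopy X β ∧ Homog c X 1)

/-- The ordinal Ramsey number `R(α,β)`: least `γ` with `γ → (α,β)²`. -/
noncomputable def Rord (α β : Ordinal) : Ordinal := sInf {γ | ClassPartition γ α β}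

/-- The closed Ramsey number `R^cl(α,β)`: least `γ` with `γ →_cl (α,β)²`. -/
noncomputable def Rcl (α β : Ordinal) : Ordinal := sInf {γ | ClPartition γ α β}

/-- The first uncountable ordinal. -/
noncomputable def omega1 : Ordinal := (Cardinal.aleph 1).ord


universe u

lemma CB_zero : CB 0 = 0 := by simp [CB, Ordinal.CNF.zero_right]

lemma CB_le_log {x : Ordinal} (hx : x ≠ 0) : CB x ≤ Ordinal.log ω x := by
  have hne : Ordinal.CNF ω x ≠ [] := by
    rw [Ordinal.CNF.ne_zero hx]; exact List.cons_ne_nil _ _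
  have hmem : (Ordinal.CNF ω x).getLast hne ∈ Ordinal.CNF ω x := List.getLast_mem hne
  have : CB x = ((Ordinal.CNF ω x).getLast hne).1 := by
    rw [CB, List.getLast?_eq_getLast hne]; rfl
  rw [this]
  exact Ordinal.CNF.fst_le_log hmem

lemma CB_lt_of_lt_opow {x α : Ordinal} (hα : 0 < α) (hx : x < ω ^ α) : CB x < α := by
  rcases eq_or_ne x 0 with rfl | hx0
  · rw [CB_zero]; exact hα
  · exact lt_of_le_of_lt (CB_le_log hx0)
      ((Ordinal.lt_opow_iff_log_lt Ordinal.one_lt_omega0 hx0).mp hx)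

lemma CB_aux {L k x : Ordinal} (hk0 : k ≠ 0) (hkw : k < ω) (hx : x < ω ^ L) :
    CB (ω ^ L * k + x) = if x = 0 then L else CB x := by
  have hω0 : (ω : Ordinal) ^ L ≠ 0 := (Ordinal.opow_pos L Ordinal.omega0_pos).ne'
  set ξ := ω ^ L * k + x with hξdef
  have hξ0 : ξ ≠ 0 := by
    have h1 : 0 < ω ^ L * k := mul_pos (Ordinal.opow_pos L Ordinal.omega0_pos)
      (pos_iff_ne_zero.mpr hk0)
    exact (lt_of_lt_of_le h1 le_self_add).ne'
  have hlog : Ordinal.log ω ξ = L := by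
    apply le_antisymm
    · have hlt : ξ < ω ^ (L + 1) := by
        calc ξ < ω ^ L * k + ω ^ L := add_lt_add_right hx _
        _ = ω ^ L * (k + 1) := by rw [mul_add_one]
        _ ≤ ω ^ L * ω := by
            have : k + 1 ≤ ω := by
              rw [Ordinal.add_one_eq_succ]; exact Order.succ_le_of_lt hkw
            exact mul_le_mul_right this _
        _ = ω ^ (L + 1) := by rw [Ordinal.opow_add, Ordinal.opow_one]
      have := (Ordinal.lt_opow_iff_log_lt Ordinal.one_lt_omega0 hξ0).mp hlt
      exact Order.lt_succ_iff.mp (by rwa [Ordinal.add_one_eq_succ] at this)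
    · have h1 : ω ^ L ≤ ξ := by
        calc ω ^ L = ω ^ L * 1 := (mul_one _).symm
        _ ≤ ω ^ L * k := mul_le_mul_right (Ordinal.one_le_iff_ne_zero.mpr hk0) _
        _ ≤ ξ := le_self_add
      have := Ordinal.log_mono_right ω h1
      rwa [Ordinal.log_opow Ordinal.one_lt_omega0] at this
  have hdiv : ξ / ω ^ L = k := by
    rw [hξdef, Ordinal.mul_add_div _ hω0, Ordinal.div_eq_zero_of_lt hx, add_zero]
  have hmod : ξ % ω ^ L = x := by
    rw [hξdef, Ordinal.mul_add_mod_self, Ordinal.mod_eq_of_lt hx]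
  have hCNF : Ordinal.CNF ω ξ = (L, k) :: Ordinal.CNF ω x := by
    rw [Ordinal.CNF.ne_zero hξ0, hlog, hdiv, hmod]
  rcases eq_or_ne x 0 with rfl | hx0
  · rw [if_pos rfl, CB, hCNF, Ordinal.CNF.zero_right]; rfl
  · rw [if_neg hx0, CB, hCNF]
    have hne : Ordinal.CNF ω x ≠ [] := by
      rw [Ordinal.CNF.ne_zero hx0]; exact List.cons_ne_nil _ _
    have : ((L, k) :: Ordinal.CNF ω x).getLast? = (Ordinal.CNF ω x).getLast? := by
      cases hE : Ordinal.CNF ω x with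
      | nil => exact absurd hE hne
      | cons b t => rfl
    rw [this]; rfl

lemma CB_tail : ∀ ξ : Ordinal, ξ ≠ 0 → ∃ u < ξ, ∀ x, u < x → x < ξ → CB x < CB ξ := by
  intro ξ
  induction ξ using Ordinal.induction with
  | h ξ IH =>
    intro hξ0
    set L := Ordinal.log ω ξ with hL
    set k := ξ / ω ^ L with hk
    set r := ξ % ω ^ L with hr
    have hω0 : (ω : Ordinal) ^ L ≠ 0 := (Ordinal.opow_pos L Ordinal.omega0_pos).ne'
    have hξeq : ω ^ L * k + r = ξ := Ordinal.div_add_mod ξ (ω ^ L)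
    have hk0 : k ≠ 0 := by
      rw [hk, ← pos_iff_ne_zero, Ordinal.div_pos hω0]
      exact Ordinal.opow_log_le_self ω hξ0
    have hkw : k < ω := Ordinal.div_opow_log_lt ξ Ordinal.one_lt_omega0
    have hrlt : r < ω ^ L := Ordinal.mod_lt ξ hω0
    have hCBξ : CB ξ = if r = 0 then L else CB r := by
      rw [← hξeq]; exact CB_aux hk0 hkw hrlt
    rcases eq_or_ne r 0 with hr0 | hr0
    · -- ξ = ω^L * k
      rw [hr0, add_zero] at hξeq
      obtain ⟨n, hn⟩ := Ordinal.lt_omega0.mp hkw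
      have hn0 : n ≠ 0 := by rintro rfl; exact hk0 (by simpa using hn)
      obtain ⟨m, rfl⟩ := Nat.exists_eq_succ_of_ne_zero hn0
      refine ⟨ω ^ L * m, ?_, ?_⟩
      · rw [← hξeq, hn]
        apply (mul_lt_mul_iff_right₀ (Ordinal.opow_pos L Ordinal.omega0_pos)).mpr
        exact_mod_cast Nat.lt_succ_self m
      · intro x hux hxξ
        have hCBξ' : CB ξ = L := by rw [hCBξ, if_pos hr0]
        have hux' : ω ^ L * m ≤ x := hux.le
        set x' := x - ω ^ L * m with hx'
        have hxeq : ω ^ L * m + x' = x := Ordinal.add_sub_cancel_of_le hux'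
        have hx'0 : x' ≠ 0 := by
          rintro h0
          rw [h0, add_zero] at hxeq
          exact absurd hxeq.symm hux.ne'
        have hx'lt : x' < ω ^ L := by
          have : ω ^ L * m + x' < ω ^ L * m + ω ^ L := by
            rw [hxeq, ← mul_add_one]
            calc x < ξ := hxξ
            _ = ω ^ L * (m + 1) := by rw [← hξeq, hn]; norm_cast
          exact (add_lt_add_iff_left _).mp this
        have hCBx : CB x = CB x' := by
          rcases Nat.eq_zero_or_pos m with rfl | hm
          · rw [← hxeq]; simp
          · have hm0 : (m : Ordinal) ≠ 0 := by exact_mod_cast hm.ne'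
            have hmw : (m : Ordinal) < ω := Ordinal.nat_lt_omega0 m
            rw [← hxeq, CB_aux hm0 hmw hx'lt, if_neg hx'0]
        rw [hCBx, hCBξ']
        exact lt_of_le_of_lt (CB_le_log hx'0)
          ((Ordinal.lt_opow_iff_log_lt Ordinal.one_lt_omega0 hx'0).mp hx'lt)
    · -- r ≠ 0
      have hrξ : r < ξ := lt_of_lt_of_le hrlt (Ordinal.opow_log_le_self ω hξ0)
      obtain ⟨u', hu'r, hu'⟩ := IH r hrξ hr0
      refine ⟨ω ^ L * k + u', ?_, ?_⟩
      · rw [← hξeq]; exact add_lt_add_right hu'r _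
      · intro x hux hxξ
        have hux' : ω ^ L * k ≤ x := le_trans le_self_add hux.le
        set x' := x - ω ^ L * k with hx'
        have hxeq : ω ^ L * k + x' = x := Ordinal.add_sub_cancel_of_le hux'
        have hu'x' : u' < x' := by
          rw [← hxeq] at hux; exact (add_lt_add_iff_left _).mp hux
        have hx'r : x' < r := by
          rw [← hxeq] at hxξ; rw [← hξeq] at hxξ; exact (add_lt_add_iff_left _).mp hxξ
        have hx'0 : x' ≠ 0 := (pos_iff_ne_zero.mp (lt_of_le_of_lt zero_le hu'x'))
        have hCBx : CB x = CB x' := by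
          rw [← hxeq, CB_aux hk0 hkw (hx'r.trans hrlt), if_neg hx'0]
        rw [hCBx, hCBξ, if_neg hr0]
        exact hu' x' hu'x' hx'r

def HasOtype (D : Set Ordinal.{u}) (γ : Ordinal.{u}) : Prop :=
  ∃ f : Set.Iio γ → Ordinal.{u}, StrictMono f ∧ ∀ i, f i ∈ D

lemma HasOtype.mono {D D' : Set Ordinal.{u}} {γ : Ordinal.{u}} (h : HasOtype D γ)
    (hDD : D ⊆ D') : HasOtype D' γ := by
  obtain ⟨f, hf, hm⟩ := h
  exact ⟨f, hf, fun i => hDD (hm i)⟩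

lemma hasOtype_zero (D : Set Ordinal.{u}) : HasOtype D 0 :=
  ⟨fun i => absurd i.2 (fun h => not_lt_zero (show i.1 < 0 from h)),
   fun i => absurd i.2 (fun h => not_lt_zero (show i.1 < 0 from h)),
   fun i => absurd i.2 (fun h => not_lt_zero (show i.1 < 0 from h))⟩

lemma hasOtype_limit {D : Set Ordinal.{u}} {A γ : Ordinal.{u}} (hD : ∀ d ∈ D, d < A)
    (hγ : Order.IsSuccLimit γ) (H : ∀ β < γ, HasOtype D β) : HasOtype D γ := by
  set D' : Set Ordinal.{u} := D ∪ Set.Ici A with hD'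
  have hub : ¬ BddAbove D' := by
    rintro ⟨b, hb⟩
    have h1 : max A (b + 1) ∈ D' := Or.inr (le_max_left A (b + 1))
    have h2 := hb h1
    have h3 : b + 1 ≤ b := (le_max_right A (b+1)).trans h2
    have h4 : b < b + 1 := by
      rw [Ordinal.add_one_eq_succ]; exact Order.lt_succ b
    exact absurd (lt_of_lt_of_le h4 h3) (lt_irrefl b)
  have claim : ∀ i : Ordinal.{u}, ∀ f : Set.Iio (i + 1) → Ordinal.{u}, StrictMono f →
      (∀ j, f j ∈ D) → Ordinal.enumOrd D' i ≤
        f ⟨i, by rw [Ordinal.add_one_eq_succ]; exact Order.lt_succ i⟩ := by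
    intro i
    induction i using Ordinal.induction with
    | h i IH =>
      intro f hf hm
      apply Ordinal.enumOrd_le_of_forall_lt (Or.inl (hm _))
      intro b hbi
      have hble : b + 1 ≤ i + 1 := add_le_add_left hbi.le 1
      have hb1 : ∀ j : Set.Iio (b + 1), j.1 < i + 1 := fun j => lt_of_lt_of_le j.2 hble
      have := IH b hbi (fun j => f ⟨j.1, hb1 j⟩)
        (fun j k hjk => hf (show (⟨j.1, hb1 j⟩ : Set.Iio (i+1)) < ⟨k.1, hb1 k⟩ from hjk))
        (fun j => hm _)
      refine lt_of_le_of_lt this (hf ?_)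
      show b < i
      exact hbi
  refine ⟨fun i => Ordinal.enumOrd D' i.1, fun i j hij => Ordinal.enumOrd_strictMono hub hij, ?_⟩
  intro i
  obtain ⟨f, hf, hm⟩ := H (i.1 + 1) (by rw [Ordinal.add_one_eq_succ]; exact hγ.succ_lt i.2)
  have hle := claim i.1 f hf hm
  have hmem := Ordinal.enumOrd_mem hub i.1
  rcases hmem with hmem | hmem
  · exact hmem
  · exact absurd (lt_of_le_of_lt (le_trans hmem hle) (hD _ (hm _))) (lt_irrefl A)

def SupPres {o : Ordinal.{u}} (g : Set.Iio o → Ordinal.{u}) : Prop :=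
  ∀ z : Set.Iio o, Order.IsSuccLimit z.1 → ∀ s < g z, ∃ w : Set.Iio o, w.1 < z.1 ∧ s < g w

lemma main_claim : ∀ γ : Ordinal.{u}, ∀ g : Set.Iio (ω ^ γ) → Ordinal.{u}, StrictMono g →
    SupPres g → HasOtype (CB '' Set.range g) γ := by
  intro γ
  induction γ using Ordinal.induction with
  | h γ IH =>
    intro g hg hsp
    rcases Ordinal.zero_or_succ_or_isSuccLimit γ with rfl | ⟨δ, rfl⟩ | hlim
    · exact hasOtype_zero _
    · -- successor case
      have hωlt : ω ^ δ < ω ^ Order.succ δ :=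
        (Ordinal.opow_lt_opow_iff_right Ordinal.one_lt_omega0).mpr (Order.lt_succ δ)
      by_cases hδ0 : δ = 0
      · subst hδ0
        refine ⟨fun _ => CB (g ⟨0, Ordinal.opow_pos _ Ordinal.omega0_pos⟩), ?_, ?_⟩
        · rintro ⟨iv, hiv⟩ ⟨jv, hjv⟩ hij
          rw [Set.mem_Iio, show Order.succ (0:Ordinal) = 1 from Ordinal.succ_zero] at hiv hjv
          have hi : iv = 0 := Ordinal.lt_one_iff_zero.mp hiv
          have hj : jv = 0 := Ordinal.lt_one_iff_zero.mp hjv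
          have hlt : iv < jv := hij
          rw [hi, hj] at hlt
          exact absurd hlt (lt_irrefl _)
        · intro i
          exact ⟨g ⟨0, Ordinal.opow_pos _ Ordinal.omega0_pos⟩, ⟨_, rfl⟩, rfl⟩
      · have h1ω : 1 < ω ^ δ := by
          have h := Ordinal.opow_le_opow_right Ordinal.omega0_pos
            (Ordinal.one_le_iff_ne_zero.mpr hδ0)
          rw [Ordinal.opow_one] at h
          exact lt_of_lt_of_le Ordinal.one_lt_omega0 h
        have hωδlim : Order.IsSuccLimit (ω ^ δ) :=
          Ordinal.isSuccLimit_opow_left Ordinal.isSuccLimit_omega0 hδ0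
        set z : Set.Iio (ω ^ Order.succ δ) := ⟨ω ^ δ, hωlt⟩ with hz
        set ξ := g z with hξ
        have h0z : (⟨0, Ordinal.opow_pos _ Ordinal.omega0_pos⟩ : Set.Iio (ω ^ Order.succ δ)) < z :=
          Subtype.mk_lt_mk.mpr (Ordinal.opow_pos δ Ordinal.omega0_pos)
        have hξ0 : ξ ≠ 0 := (zero_le.trans_lt (hg h0z)).ne'
        obtain ⟨u_, huξ, hu⟩ := CB_tail ξ hξ0
        obtain ⟨⟨wv, hwlt⟩, hwz, hws⟩ := hsp z hωδlim u_ huξ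
        have hbig : ∀ t : Set.Iio (ω ^ δ), wv + 1 + t.1 < ω ^ δ := fun t =>
          (Ordinal.principal_add_omega0_opow δ)
            ((Ordinal.principal_add_omega0_opow δ) hwz h1ω) t.2
        set g' : Set.Iio (ω ^ δ) → Ordinal.{u} :=
          fun t => g ⟨wv + 1 + t.1, (hbig t).trans hωlt⟩ with hg'def
        have hg'mono : StrictMono g' := by
          intro t t' htt
          exact hg (Subtype.mk_lt_mk.mpr (add_lt_add_right (show t.1 < t'.1 from htt) _))
        have hsp' : SupPres g' := by
          intro t htlim s hs
          have hzlim : Order.IsSuccLimit ((⟨wv + 1 + t.1, (hbig t).trans hωlt⟩ :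
              Set.Iio (ω ^ Order.succ δ)).1) := Ordinal.isSuccLimit_add _ htlim
          obtain ⟨w₂, hw₂, hsw₂⟩ := hsp _ hzlim s hs
          obtain ⟨b, hbt, hw₂b⟩ :=
            ((Ordinal.isNormal_add_right (wv + 1)).lt_iff_exists_lt htlim).mp hw₂
          refine ⟨⟨b, hbt.trans t.2⟩, hbt, ?_⟩
          exact hsw₂.trans (hg (show w₂.1 < wv + 1 + b from hw₂b))
        have hwlt' : ∀ t : Set.Iio (ω ^ δ), wv < wv + 1 + t.1 := by
          intro t
          have h0 : (0:Ordinal) < 1 + t.1 := lt_of_lt_of_le zero_lt_one le_self_add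
          calc wv = wv + 0 := (add_zero _).symm
          _ < wv + (1 + t.1) := add_lt_add_right h0 _
          _ = wv + 1 + t.1 := (add_assoc _ _ _).symm
        have hrk : ∀ t, CB (g' t) < CB ξ := by
          intro t
          have h1 : u_ < g' t := hws.trans (hg (show wv < wv + 1 + t.1 from hwlt' t))
          have h2 : g' t < ξ := hg (show wv + 1 + t.1 < ω ^ δ from hbig t)
          exact hu _ h1 h2
        obtain ⟨f₀, hf₀, hm₀⟩ := IH δ (Order.lt_succ δ) g' hg'mono hsp'
        have hf₀lt : ∀ j, f₀ j < CB ξ := by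
          intro j
          obtain ⟨x, ⟨t, rfl⟩, hx⟩ := hm₀ j
          rw [← hx]
          exact hrk t
        refine ⟨fun i => if h : i.1 < δ then f₀ ⟨i.1, h⟩ else CB ξ, ?_, ?_⟩
        · intro i j hij
          dsimp only
          by_cases hj : j.1 < δ
          · have hi : i.1 < δ := lt_trans (show i.1 < j.1 from hij) hj
            rw [dif_pos hi, dif_pos hj]
            exact hf₀ (show (⟨i.1, hi⟩ : Set.Iio δ) < ⟨j.1, hj⟩ from
              Subtype.mk_lt_mk.mpr hij)
          · have hjle : j.1 ≤ δ := Order.lt_succ_iff.mp j.2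
            have hi : i.1 < δ := lt_of_lt_of_le (show i.1 < j.1 from hij) hjle
            rw [dif_pos hi, dif_neg hj]
            exact hf₀lt _
        · intro i
          dsimp only
          by_cases hi : i.1 < δ
          · rw [dif_pos hi]
            obtain ⟨x, ⟨t, rfl⟩, hx⟩ := hm₀ ⟨i.1, hi⟩
            exact ⟨g' t, ⟨⟨wv + 1 + t.1, (hbig t).trans hωlt⟩, rfl⟩, hx⟩
          · rw [dif_neg hi]
            exact ⟨ξ, ⟨z, rfl⟩, rfl⟩
    · -- limit case
      have hb : BddAbove (CB '' Set.range g) := Ordinal.bddAbove_of_small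
      obtain ⟨A, hA⟩ := hb
      apply hasOtype_limit (A := A + 1)
        (fun d hd => lt_of_le_of_lt (hA hd)
          (by rw [Ordinal.add_one_eq_succ]; exact Order.lt_succ A)) hlim
      intro β hβ
      have hωβ : ω ^ β < ω ^ γ :=
        (Ordinal.opow_lt_opow_iff_right Ordinal.one_lt_omega0).mpr hβ
      set g_β : Set.Iio (ω ^ β) → Ordinal.{u} := fun t => g ⟨t.1, t.2.trans hωβ⟩ with hgβ
      have hgβmono : StrictMono g_β := by
        intro a b hab
        exact hg (show a.1 < b.1 from hab)
      have hspβ : SupPres g_β := by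
        intro t htlim s hs
        obtain ⟨⟨wv, hwlt⟩, hw, hsw⟩ := hsp ⟨t.1, t.2.trans hωβ⟩ htlim s hs
        exact ⟨⟨wv, hw.trans t.2⟩, hw, hsw⟩
      refine (IH β hβ g_β hgβmono hspβ).mono ?_
      apply Set.image_mono
      rintro x ⟨t, rfl⟩
      exact ⟨⟨t.1, t.2.trans hωβ⟩, rfl⟩

lemma extract {X : Set Ordinal.{u}} {o : Ordinal.{u}} (hX : IsClosedCopy X o) :
    ∃ g : Set.Iio o → Ordinal.{u}, StrictMono g ∧ SupPres g ∧ Set.range g ⊆ X := by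
  obtain ⟨iso, hc1, hc2⟩ := hX
  refine ⟨fun z => (iso.symm z : Ordinal), ?_, ?_, ?_⟩
  · intro z z' hzz
    exact Subtype.coe_lt_coe.mpr (iso.symm.strictMono hzz)
  · intro z hzlim s hs
    by_contra hcon
    push_neg at hcon
    have hgc : Continuous (fun z : Set.Iio o => (iso.symm z : Ordinal)) :=
      continuous_subtype_val.comp hc2
    have hU : IsOpen ((fun z : Set.Iio o => (iso.symm z : Ordinal)) ⁻¹' Set.Ioi s) :=
      isOpen_Ioi.preimage hgc
    rw [isOpen_induced_iff] at hU
    obtain ⟨V, hV, hVeq⟩ := hU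
    have hzV : z.1 ∈ V := by
      have : z ∈ (fun z : Set.Iio o => (iso.symm z : Ordinal)) ⁻¹' Set.Ioi s := hs
      rw [← hVeq] at this
      exact this
    rw [Ordinal.isOpen_iff] at hV
    obtain ⟨a, haz, hIoo⟩ := hV z.1 hzV hzlim
    have ha1 : a + 1 < z.1 := by
      rw [Ordinal.add_one_eq_succ]; exact hzlim.succ_lt haz
    have haa : a < a + 1 := by
      rw [Ordinal.add_one_eq_succ]; exact Order.lt_succ a
    have hmem : a + 1 ∈ V := hIoo ⟨haa, ha1⟩
    have : (⟨a + 1, ha1.trans z.2⟩ : Set.Iio o) ∈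
        (fun z : Set.Iio o => (iso.symm z : Ordinal)) ⁻¹' Set.Ioi s := by
      rw [← hVeq]; exact hmem
    exact absurd (hcon ⟨a + 1, ha1.trans z.2⟩ ha1) (not_le_of_gt this)
  · rintro x ⟨z, rfl⟩
    exact (iso.symm z).2

lemma ord01 : (0:Ordinal.{u}) < 1 := zero_lt_one
lemma ord12 : (1:Ordinal.{u}) < 2 := by
  rw [← one_add_one_eq_two, Ordinal.add_one_eq_succ]; exact Order.lt_succ 1
lemma ord23 : (2:Ordinal.{u}) < 3 := by
  rw [← two_add_one_eq_three, Ordinal.add_one_eq_succ]; exact Order.lt_succ 2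
lemma ord03 : (0:Ordinal.{u}) < 3 := (ord01.trans ord12).trans ord23
lemma ord13 : (1:Ordinal.{u}) < 3 := ord12.trans ord23
lemma lt_three {o : Ordinal.{u}} (h : o < 3) : o = 0 ∨ o = 1 ∨ o = 2 := by
  rw [← two_add_one_eq_three, Ordinal.add_one_eq_succ, Order.lt_succ_iff] at h
  rcases h.lt_or_eq with h | h
  · rw [← one_add_one_eq_two, Ordinal.add_one_eq_succ, Order.lt_succ_iff] at h
    rcases h.lt_or_eq with h | h
    · exact Or.inl (Ordinal.lt_one_iff_zero.mp h)
    · exact Or.inr (Or.inl h)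
  · exact Or.inr (Or.inr h)

universe v

lemma core {col : Ordinal.{u} → Ordinal.{u} → Fin 2} {A a b d : Ordinal.{u}}
    (hab : a < b) (hbd : b < d) (ha : a < A) (hb : b < A) (hd : d < A)
    (c1 : col a b = 1) (c2 : col a d = 1) (c3 : col b d = 1) :
    ∃ Y ⊆ Set.Iio A, IsOrderCopy Y (3:Ordinal.{v}) ∧ Homog col Y 1 := by
  set f : Set.Iio (3:Ordinal.{v}) → Ordinal.{u} :=
    fun i => if i.1 = 0 then a else if i.1 = 1 then b else d with hf
  have v0 : ∀ h : (0:Ordinal.{v}) ∈ Set.Iio 3, f ⟨0, h⟩ = a := by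
    intro h; rw [hf]; simp
  have v1 : ∀ h : (1:Ordinal.{v}) ∈ Set.Iio 3, f ⟨1, h⟩ = b := by
    intro h; rw [hf]; simp [(ord01.ne' : (1:Ordinal.{v}) ≠ 0)]
  have v2 : ∀ h : (2:Ordinal.{v}) ∈ Set.Iio 3, f ⟨2, h⟩ = d := by
    intro h; rw [hf]; dsimp only
    rw [if_neg ((ord01.trans ord12).ne' : (2:Ordinal.{v}) ≠ 0),
      if_neg (ord12.ne' : (2:Ordinal.{v}) ≠ 1)]
  have hfval : ∀ i : Set.Iio (3:Ordinal.{v}), f i = a ∨ f i = b ∨ f i = d := by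
    rintro ⟨iv, hiv⟩
    rcases lt_three hiv with rfl | rfl | rfl
    · exact Or.inl (v0 hiv)
    · exact Or.inr (Or.inl (v1 hiv))
    · exact Or.inr (Or.inr (v2 hiv))
  have hfmono : StrictMono f := by
    rintro ⟨iv, hiv⟩ ⟨jv, hjv⟩ hij
    have hlt : iv < jv := hij
    rcases lt_three hiv with rfl | rfl | rfl <;> rcases lt_three hjv with rfl | rfl | rfl <;>
      simp only [v0, v1, v2] <;>
      first
      | exact absurd hlt (lt_irrefl _)
      | exact absurd hlt (asymm ord01)
      | exact absurd hlt (asymm ord12)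
      | exact absurd hlt (asymm (ord01.trans ord12))
      | exact hab
      | exact hbd
      | exact hab.trans hbd
  refine ⟨Set.range f, ?_, ⟨(StrictMono.orderIso f hfmono).symm⟩, ?_⟩
  · rintro y ⟨i, rfl⟩
    rcases hfval i with h | h | h <;> rw [h]
    exacts [ha, hb, hd]
  · intro x hx y hy hxy
    obtain ⟨i, rfl⟩ := hx
    obtain ⟨j, rfl⟩ := hy
    rcases hfval i with h | h | h <;> rcases hfval j with h' | h' | h' <;>
        rw [h, h'] at hxy ⊢ <;>
      first
      | exact c1
      | exact c2
      | exact c3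
      | exact absurd hxy (lt_irrefl _)
      | exact absurd hxy (asymm hab)
      | exact absurd hxy (asymm hbd)
      | exact absurd hxy (asymm (hab.trans hbd))

lemma three {col : Ordinal.{u} → Ordinal.{u} → Fin 2} {A p q r : Ordinal.{u}}
    (hp : p < A) (hq : q < A) (hr : r < A)
    (D1 : (p < q ∧ col p q = 1) ∨ (q < p ∧ col q p = 1))
    (D2 : (p < r ∧ col p r = 1) ∨ (r < p ∧ col r p = 1))
    (D3 : (q < r ∧ col q r = 1) ∨ (r < q ∧ col r q = 1)) :
    ∃ Y ⊆ Set.Iio A, IsOrderCopy Y (3:Ordinal.{v}) ∧ Homog col Y 1 := by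
  rcases D1 with ⟨h1, e1⟩ | ⟨h1, e1⟩ <;> rcases D2 with ⟨h2, e2⟩ | ⟨h2, e2⟩ <;>
    rcases D3 with ⟨h3, e3⟩ | ⟨h3, e3⟩
  · exact core h1 h3 hp hq hr e1 e2 e3
  · exact core h2 h3 hp hr hq e2 e1 e3
  · exact absurd ((h1.trans h3).trans h2) (lt_irrefl p)
  · exact core h2 h1 hr hp hq e2 e3 e1
  · exact core h1 h2 hq hp hr e1 e3 e2
  · exact absurd ((h2.trans h3).trans h1) (lt_irrefl p)
  · exact core h3 h2 hq hr hp e3 e1 e2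
  · exact core h3 h1 hr hq hp e3 e2 e1


/-- If `1 ≤ α < ω₁` and `ω^α →_cl (ω^α, 3)²`, then `α → (α,3)²`. -/
theorem stmt_5 (α : Ordinal) (h1 : 1 ≤ α) (h2 : α < omega1)
    (h : ClPartition (Ordinal.omega0 ^ α) (Ordinal.omega0 ^ α) 3) :
    ClassPartition α α 3 := by
  intro c
  have hα : 0 < α := Order.one_le_iff_pos.mp h1
  set c' : Ordinal → Ordinal → Fin 2 := fun x y =>
    if CB x < CB y then c (CB x) (CB y)
    else if CB y < CB x then c (CB y) (CB x) else 0 with hc'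
  rcases h c' with ⟨X, hXsub, hXcopy, hXhom⟩ | ⟨X, hXsub, hXcopy, hXhom⟩
  · -- color 0 : a closed copy of ω^α
    obtain ⟨g, hg, hsp, hrange⟩ := extract hXcopy
    obtain ⟨f, hfmono, hfmem⟩ := main_claim α g hg hsp
    have hfX : ∀ i, ∃ x ∈ X, CB x = f i := by
      intro i
      obtain ⟨x, ⟨z, rfl⟩, hx⟩ := hfmem i
      exact ⟨g z, hrange ⟨z, rfl⟩, hx⟩
    have hflt : ∀ i, f i < α := by
      intro i
      obtain ⟨x, hxX, hx⟩ := hfX i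
      rw [← hx]
      exact CB_lt_of_lt_opow hα (hXsub hxX)
    left
    refine ⟨Set.range f, ?_, ⟨(StrictMono.orderIso f hfmono).symm⟩, ?_⟩
    · rintro y ⟨i, rfl⟩
      exact hflt i
    · intro x hx y hy hxy
      obtain ⟨i, rfl⟩ := hx
      obtain ⟨j, rfl⟩ := hy
      obtain ⟨a, haX, ha⟩ := hfX i
      obtain ⟨b, hbX, hb⟩ := hfX j
      rcases lt_trichotomy a b with hab | rfl | hab
      · have hthis := hXhom a haX b hbX hab
        have hcc : CB a < CB b := by rw [ha, hb]; exact hxy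
        simp only [hc'] at hthis
        rw [if_pos hcc] at hthis
        rw [← ha, ← hb]
        exact hthis
      · exact absurd hxy (by rw [← ha, ← hb]; exact lt_irrefl _)
      · have hthis := hXhom b hbX a haX hab
        have h1' : ¬ CB b < CB a := by rw [ha, hb]; exact asymm hxy
        have h2' : CB a < CB b := by rw [ha, hb]; exact hxy
        simp only [hc'] at hthis
        rw [if_neg h1', if_pos h2'] at hthis
        rw [← ha, ← hb]
        exact hthis
  · -- color 1 : a closed copy of 3
    obtain ⟨iso, -, -⟩ := hXcopy
    set a0 : Ordinal := (iso.symm ⟨(0:Ordinal), ord03⟩).1 with ha0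
    set a1 : Ordinal := (iso.symm ⟨(1:Ordinal), ord13⟩).1 with ha1
    set a2 : Ordinal := (iso.symm ⟨(2:Ordinal), ord23⟩).1 with ha2
    have hm0 : a0 ∈ X := (iso.symm _).2
    have hm1 : a1 ∈ X := (iso.symm _).2
    have hm2 : a2 ∈ X := (iso.symm _).2
    have h01 : a0 < a1 := Subtype.coe_lt_coe.mpr (iso.symm.strictMono (Subtype.mk_lt_mk.mpr ord01))
    have h12 : a1 < a2 := Subtype.coe_lt_coe.mpr (iso.symm.strictMono (Subtype.mk_lt_mk.mpr ord12))
    have h02 : a0 < a2 := h01.trans h12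
    have decode : ∀ u v : Ordinal, c' u v = 1 →
        (CB u < CB v ∧ c (CB u) (CB v) = 1) ∨ (CB v < CB u ∧ c (CB v) (CB u) = 1) := by
      intro u v hduv
      simp only [hc'] at hduv
      by_cases hd1 : CB u < CB v
      · rw [if_pos hd1] at hduv
        exact Or.inl ⟨hd1, hduv⟩
      · rw [if_neg hd1] at hduv
        by_cases hd2 : CB v < CB u
        · rw [if_pos hd2] at hduv
          exact Or.inr ⟨hd2, hduv⟩
        · rw [if_neg hd2] at hduv
          exact absurd hduv (by decide)
    have D1 := decode a0 a1 (hXhom a0 hm0 a1 hm1 h01)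
    have D2 := decode a0 a2 (hXhom a0 hm0 a2 hm2 h02)
    have D3 := decode a1 a2 (hXhom a1 hm1 a2 hm2 h12)
    have b0 : CB a0 < α := CB_lt_of_lt_opow hα (hXsub hm0)
    have b1 : CB a1 < α := CB_lt_of_lt_opow hα (hXsub hm1)
    have b2 : CB a2 < α := CB_lt_of_lt_opow hα (hXsub hm2)
    right
    exact three b0 b1 b2 D1 D2 D3
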